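/- Let p be an odd prime and n, k positive integers with p^n ≡ 3 (mod 4), and let d be an odd positive integer with d·(p^k+1) ≡ (p^n+1)/2 (mod p^n−1). Then the power function f(x)=x^d on F_{p^n} satisfies _{−1}Δ_f ≤ 3: for all a, b ∈ F_{p^n}, the equation (x+a)^d + x^d = b has at most 3 solutions x ∈ F_{p^n}. -/

import Mathlib

section Aux

variable {p k n : ℕ} {F : Type*} [Field F] [Fintype F]

private lemma aux_pow_pow_card (hcard : Fintype.card F = p ^ n) (x : F) (j : ℕ) :
    x ^ p ^ (n * j) = x := by
  induction j with
  | zero => simp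
  | succ j ih =>
    have h1 : p ^ (n * (j + 1)) = p ^ (n * j) * p ^ n := by rw [Nat.mul_succ, pow_add]
    rw [h1, pow_mul, ih, ← hcard, FiniteField.pow_card]

private lemma aux_fix (hcard : Fintype.card F = p ^ n) (hn : Odd n) (t : F)
    (h : t ^ p ^ (2 * k) = t) : t ^ p ^ k = t := by
  obtain ⟨j, hj⟩ := hn
  have key : ∀ s : ℕ, t ^ p ^ (k * (2 * s + 1)) = t ^ p ^ k := by
    intro s
    induction s with
    | zero => norm_num
    | succ s ih =>
      have h1 : k * (2 * (s + 1) + 1) = 2 * k + k * (2 * s + 1) := by ring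
      rw [h1, pow_add, pow_mul, h, ih]
  have h2 : t ^ p ^ (k * n) = t ^ p ^ k := by rw [hj]; exact key j
  rw [Nat.mul_comm, aux_pow_pow_card hcard] at h2
  exact h2.symm

private lemma aux_frob_neg_self (hcard : Fintype.card F = p ^ n) (hn : Odd n)
    (hpk : Odd (p ^ k)) (h2 : (2 : F) ≠ 0) (t : F) (h : t ^ p ^ k = -t) : t = 0 := by
  have h2k : t ^ p ^ (2 * k) = t := by
    have he : p ^ (2 * k) = p ^ k * p ^ k := by rw [two_mul, pow_add]
    rw [he, pow_mul', h, hpk.neg_pow, h, neg_neg]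
  have hfix := aux_fix hcard hn t h2k
  have ht2 : (2 : F) * t = 0 := by rw [h] at hfix; linear_combination -hfix
  rcases mul_eq_zero.mp ht2 with h' | h'
  · exact absurd h' h2
  · exact h'

private lemma aux_frob_unit (hcard : Fintype.card F = p ^ n) (hn : Odd n) (z : F)
    (h : z ^ p ^ k * z = 1) : z = 1 ∨ z = -1 := by
  have hz : z ≠ 0 := by
    intro h0
    rw [h0, mul_zero] at h
    exact one_ne_zero h.symm
  have hinv : z ^ p ^ k = z⁻¹ := eq_inv_of_mul_eq_one_left h
  have h2k : z ^ p ^ (2 * k) = z := by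
    have he : p ^ (2 * k) = p ^ k * p ^ k := by rw [two_mul, pow_add]
    rw [he, pow_mul', hinv, inv_pow, hinv, inv_inv]
  have hfix := aux_fix hcard hn z h2k
  rw [hfix] at h
  exact mul_self_eq_one_iff.mp h

end Aux

/-- Theorem 3.3 (Theorem `thma`), case `c = -1`, `d` odd: `₋₁Δ_f ≤ 3`: for all
`a, b`, the equation `(x+a)^d + x^d = b` has at most 3 solutions in `F_{p^n}`. -/
theorem stmt_7 (p n k d : ℕ) (hp : p.Prime) (hodd : Odd p)
    (hn0 : 0 < n) (hk0 : 0 < k) (hd0 : 0 < d) (hd : Odd d)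
    (hmod : p ^ n % 4 = 3)
    (hcong : d * (p ^ k + 1) ≡ (p ^ n + 1) / 2 [MOD p ^ n - 1])
    (F : Type*) [Field F] [Fintype F] (hcard : Fintype.card F = p ^ n)
    (a b : F) :
    {x : F | (x + a) ^ d + x ^ d = b}.ncard ≤ 3 := by
  classical
  haveI hfact : Fact p.Prime := ⟨hp⟩
  -- the characteristic of F is p
  have hcc : CharP F p := by
    obtain ⟨p', hc⟩ := CharP.exists F
    haveI := hc
    obtain ⟨n', hp', hc'⟩ := FiniteField.card F p'
    have hdvd : p ∣ p' ^ (n' : ℕ) := by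
      rw [← hc', hcard]; exact dvd_pow_self p hn0.ne'
    have : p = p' := (Nat.prime_dvd_prime_iff_eq hp hp').mp (hp.dvd_of_dvd_pow hdvd)
    rwa [this]
  haveI := hcc
  have hpk0 : p ^ k ≠ 0 := (pow_pos hp.pos k).ne'
  obtain ⟨c4, hc4⟩ : ∃ c, p ^ n = 4 * c + 3 := ⟨p ^ n / 4, by omega⟩
  set m := (p ^ n - 1) / 2 with hmdef
  have hm1 : m = 2 * c4 + 1 := by omega
  have h2m : 2 * m = p ^ n - 1 := by omega
  have hq_half : (p ^ n + 1) / 2 = m + 1 := by omega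
  have hm_odd : Odd m := ⟨c4, by omega⟩
  -- n is odd
  have hn_odd : Odd n := by
    by_contra hne
    obtain ⟨j, hj⟩ := Nat.not_odd_iff_even.mp hne
    obtain ⟨t, ht⟩ := hodd.pow (n := j)
    have hsq : p ^ n = (p ^ j) * (p ^ j) := by rw [hj, ← pow_add]
    rw [hsq, ht] at hc4
    have hexp : (2 * t + 1) * (2 * t + 1) = 4 * (t * t + t) + 1 := by ring
    omega
  -- 2 ≠ 0 in F
  have h2F : (2 : F) ≠ 0 := by
    intro h
    have hdvd : p ∣ 2 := (CharP.cast_eq_zero_iff F p 2).mp (by exact_mod_cast h)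
    have := (Nat.prime_dvd_prime_iff_eq hp Nat.prime_two).mp hdvd
    obtain ⟨t, ht⟩ := hodd
    omega
  have h1ne : (1 : F) ≠ -1 := fun h => h2F (by linear_combination h)
  have hpk_odd : Odd (p ^ k) := hodd.pow
  have hfrob_add : ∀ u v : F, (u + v) ^ p ^ k = u ^ p ^ k + v ^ p ^ k := fun u v =>
    add_pow_char_pow u v p k
  have hfrob_sub : ∀ u v : F, (u - v) ^ p ^ k = u ^ p ^ k - v ^ p ^ k := fun u v =>
    sub_pow_char_pow u v k
  have hfrob_neg : ∀ u : F, (-u) ^ p ^ k = -(u ^ p ^ k) := fun u => hpk_odd.neg_pow u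
  have htwo : (2 : F) ^ p ^ k = 2 := by
    have h := hfrob_add 1 1
    norm_num at h
    exact h
  have hunit : ∀ x : F, x ≠ 0 → x ^ (2 * m) = 1 := by
    intro x hx
    rw [h2m, ← hcard]
    exact FiniteField.pow_card_sub_one_eq_one x hx
  have hpowmod : ∀ x : F, x ≠ 0 → ∀ i j : ℕ, i ≡ j [MOD 2 * m] → x ^ i = x ^ j := by
    have hstep : ∀ x : F, x ≠ 0 → ∀ i : ℕ, x ^ i = x ^ (i % (2 * m)) := by
      intro x hx i
      conv_lhs => rw [← Nat.div_add_mod i (2 * m)]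
      rw [pow_add, pow_mul, hunit x hx, one_pow, one_mul]
    intro x hx i j hij
    rw [hstep x hx i, hstep x hx j, hij]
  have hcong' : d * (p ^ k + 1) ≡ m + 1 [MOD 2 * m] := by
    rw [h2m, ← hq_half]
    exact hcong
  have hP5 : ∀ x : F, x ≠ 0 → (x ^ d) ^ p ^ k * x ^ d = x ^ m * x := by
    intro x hx
    have h1 : (x ^ d) ^ p ^ k * x ^ d = x ^ (d * (p ^ k + 1)) := by
      rw [← pow_mul, ← pow_add]
      congr 1
    have h2 : x ^ (d * (p ^ k + 1)) = x ^ (m + 1) := hpowmod x hx _ _ hcong'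
    rw [h1, h2, pow_succ]
  have hchisq : ∀ x : F, x ≠ 0 → x ^ m * x ^ m = 1 := by
    intro x hx
    rw [← pow_add, ← two_mul]
    exact hunit x hx
  have hchi_pm : ∀ x : F, x ≠ 0 → x ^ m = 1 ∨ x ^ m = -1 := fun x hx =>
    mul_self_eq_one_iff.mp (hchisq x hx)
  have hchi_d : ∀ x : F, x ≠ 0 → (x ^ d) ^ m = x ^ m := by
    intro x hx
    rw [← pow_mul, mul_comm, pow_mul]
    rcases hchi_pm x hx with h | h
    · rw [h, one_pow]
    · rw [h]
      exact hd.neg_one_pow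
  -- the d-th power map is injective
  have hdinj : ∀ x y : F, x ^ d = y ^ d → x = y := by
    intro x y hxy
    rcases eq_or_ne x 0 with rfl | hx
    · rw [zero_pow hd0.ne', eq_comm, pow_eq_zero_iff hd0.ne'] at hxy
      exact hxy.symm
    rcases eq_or_ne y 0 with rfl | hy
    · rw [zero_pow hd0.ne', pow_eq_zero_iff hd0.ne'] at hxy
      exact hxy
    have h5x := hP5 x hx
    have h5y := hP5 y hy
    have he : x ^ m * x = y ^ m * y := by rw [← h5x, ← h5y, hxy]
    have e2 : (x ^ m * x ^ m) * (x * x) = (y ^ m * y ^ m) * (y * y) := by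
      rw [show (x ^ m * x ^ m) * (x * x) = (x ^ m * x) * (x ^ m * x) from by ring,
        show (y ^ m * y ^ m) * (y * y) = (y ^ m * y) * (y ^ m * y) from by ring, he]
    rw [hchisq x hx, hchisq y hy, one_mul, one_mul] at e2
    have hfac : (x - y) * (x + y) = 0 := by linear_combination e2
    rcases mul_eq_zero.mp hfac with h | h
    · exact sub_eq_zero.mp h
    · have hyx : y = -x := by linear_combination h
      rw [hyx, hd.neg_pow] at hxy
      have h2x : (2 : F) * x ^ d = 0 := by linear_combination hxy
      rcases mul_eq_zero.mp h2x with h' | h'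
      · exact absurd h' h2F
      · exact absurd h' (pow_ne_zero _ hx)
  -- kernel lemma
  have hK2 : ∀ u v : F, v ≠ 0 → u ^ p ^ k * v + v ^ p ^ k * u = 0 → u = 0 := by
    intro u v hv h
    have hvpk : v ^ p ^ k ≠ 0 := pow_ne_zero _ hv
    have ht : (u / v) ^ p ^ k = -(u / v) := by
      rw [div_pow]
      field_simp
      linear_combination h
    have := aux_frob_neg_self hcard hn_odd hpk_odd h2F (u / v) ht
    exact (div_eq_zero_iff.mp this).resolve_right hv
  have hunit2 : ∀ z : F, z ^ p ^ k * z = 1 → z = 1 ∨ z = -1 := fun z h =>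
    aux_frob_unit hcard hn_odd z h
  -- master equations
  have hkey_eq : ∀ x : F, (x + a) ^ d + x ^ d = b → x ≠ 0 → x + a ≠ 0 → ∀ e : F,
      (x + a) ^ m = e → x ^ m = e →
      b ^ p ^ k * b - (b ^ p ^ k * x ^ d + b * (x ^ d) ^ p ^ k) = e * a := by
    intro x hx hx0 hxa e he1 he2
    have h5u := hP5 (x + a) hxa
    have h5v := hP5 x hx0
    rw [he1] at h5u
    rw [he2] at h5v
    have hsub : (x + a) ^ d = b - x ^ d := by linear_combination hx
    have hfu : ((x + a) ^ d) ^ p ^ k = b ^ p ^ k - (x ^ d) ^ p ^ k := by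
      rw [hsub, hfrob_sub]
    linear_combination h5u - h5v - ((x + a) ^ d) * hfu -
      (b ^ p ^ k - (x ^ d) ^ p ^ k) * hsub
  have hkey_mix : ∀ x : F, (x + a) ^ d + x ^ d = b → x ≠ 0 → x + a ≠ 0 → ∀ e : F,
      (x + a) ^ m = e → x ^ m = -e →
      b ^ p ^ k * b - b ^ p ^ k * x ^ d - b * (x ^ d) ^ p ^ k
        + 2 * ((x ^ d) ^ p ^ k) * x ^ d = e * a := by
    intro x hx hx0 hxa e he1 he2
    have h5u := hP5 (x + a) hxa
    have h5v := hP5 x hx0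
    rw [he1] at h5u
    rw [he2] at h5v
    have hsub : (x + a) ^ d = b - x ^ d := by linear_combination hx
    have hfu : ((x + a) ^ d) ^ p ^ k = b ^ p ^ k - (x ^ d) ^ p ^ k := by
      rw [hsub, hfrob_sub]
    linear_combination h5u + h5v - ((x + a) ^ d) * hfu -
      (b ^ p ^ k - (x ^ d) ^ p ^ k) * hsub
  -- core contradiction for the mixed case with b = ±a^d
  have hmix_core : ∀ u v e : F, u ≠ 0 → v ≠ 0 → e * e = 1 → u ^ m = e → v ^ m = -e →
      u ^ p ^ k * (2 * u + v) + v ^ p ^ k * (2 * v + u) = 0 → False := by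
    intro u v e hu0 hv0 hee hum hvm hrel
    have he0 : e ≠ 0 := by
      intro h
      rw [h, mul_zero] at hee
      exact one_ne_zero hee.symm
    have hvpk : v ^ p ^ k ≠ 0 := pow_ne_zero _ hv0
    set t := u / v with htdef
    have ht : t ^ p ^ k * (2 * t + 1) + (t + 2) = 0 := by
      have hexp : t ^ p ^ k * (2 * t + 1) + (t + 2)
          = (u ^ p ^ k * (2 * u + v) + v ^ p ^ k * (2 * v + u)) / (v ^ p ^ k * v) := by
        rw [htdef, div_pow]
        field_simp
        ring
      rw [hexp, hrel, zero_div]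
    have hchit : t ^ m = -1 := by
      rw [htdef, div_pow, hum, hvm, div_eq_iff (neg_ne_zero.mpr he0)]
      ring
    have hcontra1 : t = 1 → False := by
      intro h1
      rw [h1, one_pow] at hchit
      exact h1ne hchit
    by_cases h3 : (3 : F) = 0
    · -- characteristic 3
      have hfac : (1 - t) * (t ^ p ^ k - 1) = 0 := by
        linear_combination ht - (t * t ^ p ^ k + 1) * h3
      rcases mul_eq_zero.mp hfac with h | h
      · exact hcontra1 (by linear_combination -h)
      · have hT1 : t ^ p ^ k = 1 := by linear_combination h
        have hiter : ∀ j : ℕ, t ^ p ^ (k * (j + 1)) = 1 := by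
          intro j
          induction j with
          | zero => simpa using hT1
          | succ j ih =>
            have he2 : k * (j + 1 + 1) = k * (j + 1) + k := by ring
            rw [he2, pow_add, pow_mul, ih, one_pow]
        have h1 := aux_pow_pow_card hcard t k
        have he2 : n * k = k * ((n - 1) + 1) := by
          rw [Nat.mul_comm]
          congr 1
          omega
        rw [he2, hiter (n - 1)] at h1
        exact hcontra1 h1.symm
    · -- characteristic ≠ 3
      have hT2 : t ^ p ^ (2 * k) * (2 * t ^ p ^ k + 1) + (t ^ p ^ k + 2) = 0 := by
        have h0 : (t ^ p ^ k * (2 * t + 1) + (t + 2)) ^ p ^ k = 0 := by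
          rw [ht]
          exact zero_pow hpk0
        have e1 : ((2 : F) * t + 1) ^ p ^ k = 2 * t ^ p ^ k + 1 := by
          rw [hfrob_add, mul_pow, htwo, one_pow]
        have e2 : (t + (2 : F)) ^ p ^ k = t ^ p ^ k + 2 := by
          rw [hfrob_add, htwo]
        have e3 : (t ^ p ^ k) ^ p ^ k = t ^ p ^ (2 * k) := by
          rw [← pow_mul, ← pow_add, two_mul]
        rw [hfrob_add, mul_pow, e1, e2, e3] at h0
        exact h0
      have hR3 : (3 : F) * (t ^ p ^ (2 * k) - t) = 0 := by
        linear_combination (2 * t ^ p ^ (2 * k) + 1) * ht - (2 * t + 1) * hT2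
      have hRt : t ^ p ^ (2 * k) = t := by
        rcases mul_eq_zero.mp hR3 with h | h
        · exact absurd h h3
        · linear_combination h
      have hTt : t ^ p ^ k = t := aux_fix hcard hn_odd t hRt
      rw [hTt] at ht
      have hcube2 : (2 : F) * (t ^ 3 - 1) = 0 := by linear_combination (t - 1) * ht
      have hcube : t ^ 3 = 1 := by
        rcases mul_eq_zero.mp hcube2 with h | h
        · exact absurd h h2F
        · linear_combination h
      have hfin : (t ^ 3) ^ m = (t ^ m) ^ 3 := by
        rw [← pow_mul, ← pow_mul, Nat.mul_comm]
      rw [hcube, hchit, one_pow] at hfin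
      apply h2F
      linear_combination hfin
  -- Case a = 0 : at most one solution
  rcases eq_or_ne a 0 with rfl | ha
  · refine le_trans ((Set.ncard_le_one (Set.toFinite _)).mpr ?_) (by norm_num)
    intro x hx y hy
    simp only [Set.mem_setOf_eq, add_zero] at hx hy
    apply hdinj
    have h2 : (2 : F) * x ^ d = 2 * y ^ d := by linear_combination hx - hy
    exact mul_left_cancel₀ h2F h2
  by_cases hb : b = a ^ d ∨ b = -(a ^ d)
  · -- Special case: b = ± a^d; the only solution is the trivial one
    have hbne : b ≠ 0 := by
      rcases hb with rfl | rfl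
      · exact pow_ne_zero _ ha
      · exact neg_ne_zero.mpr (pow_ne_zero _ ha)
    have hbs : b ^ p ^ k * b = a ^ m * a := by
      rcases hb with rfl | rfl
      · exact hP5 a ha
      · rw [hfrob_neg, neg_mul_neg]
        exact hP5 a ha
    have hsubset : {x : F | (x + a) ^ d + x ^ d = b} ⊆ {0, -a} := by
      intro x hx
      simp only [Set.mem_setOf_eq] at hx
      by_contra hxmem
      simp only [Set.mem_insert_iff, Set.mem_singleton_iff, not_or] at hxmem
      obtain ⟨hx0, hxna⟩ := hxmem
      have hxa : x + a ≠ 0 := fun h => hxna (by linear_combination h)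
      have hu0 : (x + a) ^ d ≠ 0 := pow_ne_zero _ hxa
      have hv0 : x ^ d ≠ 0 := pow_ne_zero _ hx0
      -- mixed-case cross term identity
      have hcross : ∀ e : F, (x + a) ^ m = e → x ^ m = -e →
          ((x + a) ^ d) ^ p ^ k * (x ^ d) + (x ^ d) ^ p ^ k * ((x + a) ^ d)
            = a ^ m * a - e * a := by
        intro e he1 he2
        have h5u := hP5 (x + a) hxa
        have h5v := hP5 x hx0
        rw [he1] at h5u
        rw [he2] at h5v
        have hC : b ^ p ^ k = ((x + a) ^ d) ^ p ^ k + (x ^ d) ^ p ^ k := by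
          rw [← hx, hfrob_add]
        have expand : b ^ p ^ k * b
            = (((x + a) ^ d) ^ p ^ k + (x ^ d) ^ p ^ k) * ((x + a) ^ d + x ^ d) := by
          rw [← hC, hx]
        linear_combination hbs - expand - h5u - h5v
      -- helpers for the equal-sign case
      have heqcase : ∀ e : F, e ≠ 0 → (x + a) ^ m = e → x ^ m = e → False := by
        intro e he0 he1 he2
        have key := hkey_eq x hx hx0 hxa e he1 he2
        rcases hchi_pm a ha with hea | hea
        · rcases eq_or_ne e 1 with rfl | hne1'
          · -- e = 1 = a^m : kernel forces x^d = 0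
            have h0 : (x ^ d) ^ p ^ k * b + b ^ p ^ k * x ^ d = 0 := by
              linear_combination hbs - key + a * hea
            exact hv0 (hK2 (x ^ d) b hbne h0)
          · -- e = -1, a^m = 1 : forces x^d = b, i.e. (x+a)^d = 0
            have he' : e = -1 := by
              rcases hchi_pm (x + a) hxa with h | h
              · exact absurd (he1 ▸ h) hne1'
              · exact he1 ▸ h ▸ rfl
            subst he'
            have h0 : (x ^ d - b) ^ p ^ k * b + b ^ p ^ k * (x ^ d - b) = 0 := by
              rw [hfrob_sub]
              linear_combination -key - hbs - a * hea
            have hvb := hK2 (x ^ d - b) b hbne h0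
            apply hu0
            linear_combination hx - hvb
        · rcases eq_or_ne e (-1) with rfl | hne1'
          · -- e = -1 = a^m : kernel forces x^d = 0
            have h0 : (x ^ d) ^ p ^ k * b + b ^ p ^ k * x ^ d = 0 := by
              linear_combination hbs - key + a * hea
            exact hv0 (hK2 (x ^ d) b hbne h0)
          · have he' : e = 1 := by
              rcases hchi_pm (x + a) hxa with h | h
              · exact he1 ▸ h ▸ rfl
              · exact absurd (he1 ▸ h) hne1'
            subst he'
            have h0 : (x ^ d - b) ^ p ^ k * b + b ^ p ^ k * (x ^ d - b) = 0 := by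
              rw [hfrob_sub]
              linear_combination -key - hbs - a * hea
            have hvb := hK2 (x ^ d - b) b hbne h0
            apply hu0
            linear_combination hx - hvb
      -- helpers for the mixed case
      have hmixcase : ∀ e : F, e * e = 1 → (x + a) ^ m = e → x ^ m = -e → False := by
        intro e hee he1 he2
        have hcr := hcross e he1 he2
        have hum : ((x + a) ^ d) ^ m = e := by rw [hchi_d (x + a) hxa, he1]
        have hvm : (x ^ d) ^ m = -e := by rw [hchi_d x hx0, he2]
        rcases hchi_pm a ha with hea | hea
        · rcases eq_or_ne e 1 with rfl | hne1'
          · -- e = 1 = a^m : cross term is 0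
            have h0 : ((x + a) ^ d) ^ p ^ k * (x ^ d) + (x ^ d) ^ p ^ k * ((x + a) ^ d)
                = 0 := by linear_combination hcr + a * hea
            exact hu0 (hK2 ((x + a) ^ d) (x ^ d) hv0 h0)
          · have he' : e = -1 := by
              rcases hchi_pm (x + a) hxa with h | h
              · exact absurd (he1 ▸ h) hne1'
              · exact he1 ▸ h ▸ rfl
            subst he'
            have h5u := hP5 (x + a) hxa
            have h5v := hP5 x hx0
            rw [he1] at h5u
            rw [he2] at h5v
            have hrel : ((x + a) ^ d) ^ p ^ k * (2 * (x + a) ^ d + x ^ d)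
                + (x ^ d) ^ p ^ k * (2 * (x ^ d) + (x + a) ^ d) = 0 := by
              linear_combination hcr + a * hea + 2 * h5u + 2 * h5v
            exact hmix_core ((x + a) ^ d) (x ^ d) (-1) hu0 hv0 (by norm_num) hum hvm hrel
        · rcases eq_or_ne e (-1) with rfl | hne1'
          · have h0 : ((x + a) ^ d) ^ p ^ k * (x ^ d) + (x ^ d) ^ p ^ k * ((x + a) ^ d)
                = 0 := by linear_combination hcr + a * hea
            exact hu0 (hK2 ((x + a) ^ d) (x ^ d) hv0 h0)
          · have he' : e = 1 := by
              rcases hchi_pm (x + a) hxa with h | h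
              · exact he1 ▸ h ▸ rfl
              · exact absurd (he1 ▸ h) hne1'
            subst he'
            have h5u := hP5 (x + a) hxa
            have h5v := hP5 x hx0
            rw [he1] at h5u
            rw [he2] at h5v
            have hrel : ((x + a) ^ d) ^ p ^ k * (2 * (x + a) ^ d + x ^ d)
                + (x ^ d) ^ p ^ k * (2 * (x ^ d) + (x + a) ^ d) = 0 := by
              linear_combination hcr + a * hea + 2 * h5u + 2 * h5v
            exact hmix_core ((x + a) ^ d) (x ^ d) 1 hu0 hv0 (by norm_num) hum hvm hrel
      rcases hchi_pm (x + a) hxa with he1 | he1 <;> rcases hchi_pm x hx0 with he2 | he2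
      · exact heqcase 1 one_ne_zero he1 he2
      · exact hmixcase 1 (by norm_num) he1 (by simpa using he2)
      · exact hmixcase (-1) (by norm_num) he1 (by simpa using he2)
      · exact heqcase (-1) (by norm_num) he1 he2
    refine le_trans (Set.ncard_le_ncard hsubset (Set.toFinite _)) ?_
    refine le_trans (Set.ncard_insert_le _ _) ?_
    rw [Set.ncard_singleton]
    norm_num
  -- Main case : b ≠ ± a^d
  push_neg at hb
  obtain ⟨hb1, hb2⟩ := hb
  have hx0S : ∀ x : F, (x + a) ^ d + x ^ d = b → x ≠ 0 := by
    intro x hx h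
    apply hb1
    subst h
    rw [← hx, zero_add, zero_pow hd0.ne', add_zero]
  have hxaS : ∀ x : F, (x + a) ^ d + x ^ d = b → x + a ≠ 0 := by
    intro x hx h
    apply hb2
    have hxeq : x = -a := by linear_combination h
    subst hxeq
    rw [← hx, neg_add_cancel, zero_pow hd0.ne', zero_add, hd.neg_pow]
  -- equal-sign class, same sign : unique solution
  have hC2s : ∀ x y : F, (x + a) ^ d + x ^ d = b → (y + a) ^ d + y ^ d = b → ∀ e : F,
      e ≠ 0 → (x + a) ^ m = e → x ^ m = e → (y + a) ^ m = e → y ^ m = e → x = y := by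
    intro x y hx hy e he0 hx1 hx2 hy1 hy2
    have keyx := hkey_eq x hx (hx0S x hx) (hxaS x hx) e hx1 hx2
    have keyy := hkey_eq y hy (hx0S y hy) (hxaS y hy) e hy1 hy2
    rcases eq_or_ne b 0 with rfl | hbne
    · exfalso
      simp only [zero_pow hpk0, zero_mul, mul_zero, add_zero, sub_zero, zero_sub,
        zero_add, neg_eq_zero, neg_zero, sub_self] at keyx
      rcases mul_eq_zero.mp keyx.symm with h | h
      · exact he0 h
      · exact ha h
    · have h0 : (x ^ d - y ^ d) ^ p ^ k * b + b ^ p ^ k * (x ^ d - y ^ d) = 0 := by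
        rw [hfrob_sub]
        linear_combination keyy - keyx
      have := hK2 _ b hbne h0
      exact hdinj x y (by linear_combination this)
  -- equal-sign class, opposite signs : impossible
  have hC2o : ∀ x y : F, (x + a) ^ d + x ^ d = b → (y + a) ^ d + y ^ d = b → ∀ e : F,
      e ≠ 0 → (x + a) ^ m = e → x ^ m = e → (y + a) ^ m = -e → y ^ m = -e → False := by
    intro x y hx hy e he0 hx1 hx2 hy1 hy2
    have keyx := hkey_eq x hx (hx0S x hx) (hxaS x hx) e hx1 hx2
    have keyy := hkey_eq y hy (hx0S y hy) (hxaS y hy) (-e) hy1 hy2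
    rcases eq_or_ne b 0 with rfl | hbne
    · simp only [zero_pow hpk0, zero_mul, mul_zero, add_zero, sub_zero, zero_sub,
        zero_add, neg_eq_zero, neg_zero, sub_self] at keyx
      rcases mul_eq_zero.mp keyx.symm with h | h
      · exact he0 h
      · exact ha h
    · have h0 : (x ^ d + y ^ d - b) ^ p ^ k * b + b ^ p ^ k * (x ^ d + y ^ d - b) = 0 := by
        rw [hfrob_sub, hfrob_add]
        linear_combination -keyx - keyy
      have hw := hK2 _ b hbne h0
      have hyd : y ^ d = (x + a) ^ d := by linear_combination hw - hx
      have heq := hdinj y (x + a) hyd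
      have hmm : y ^ m = (x + a) ^ m := by rw [heq]
      rw [hy2, hx1] at hmm
      have h2e : (2 : F) * e = 0 := by linear_combination -hmm
      rcases mul_eq_zero.mp h2e with h | h
      · exact h2F h
      · exact he0 h
  -- mixed class with given sign : unique solution
  have hC1 : ∀ x y : F, (x + a) ^ d + x ^ d = b → (y + a) ^ d + y ^ d = b → ∀ e : F,
      e ≠ 0 → (x + a) ^ m = e → x ^ m = -e → (y + a) ^ m = e → y ^ m = -e → x = y := by
    intro x y hx hy e he0 hx1 hx2 hy1 hy2
    have keyx := hkey_mix x hx (hx0S x hx) (hxaS x hx) e hx1 hx2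
    have keyy := hkey_mix y hy (hx0S y hy) (hxaS y hy) e hy1 hy2
    have hwx : (2 * x ^ d - b) ^ p ^ k * (2 * x ^ d - b)
        = 2 * (e * a) - b ^ p ^ k * b := by
      rw [hfrob_sub, mul_pow, htwo]
      linear_combination 2 * keyx
    have hwy : (2 * y ^ d - b) ^ p ^ k * (2 * y ^ d - b)
        = 2 * (e * a) - b ^ p ^ k * b := by
      rw [hfrob_sub, mul_pow, htwo]
      linear_combination 2 * keyy
    rcases eq_or_ne (2 * y ^ d - b) 0 with hzy | hzy
    · rw [hzy] at hwy
      simp only [zero_pow hpk0, zero_mul, mul_zero] at hwy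
      have h00 : (2 * x ^ d - b) ^ p ^ k * (2 * x ^ d - b) = 0 := by
        rw [hwx, ← hwy]
      have hw0 : 2 * x ^ d - b = 0 := by
        rcases mul_eq_zero.mp h00 with h | h
        · exact (pow_eq_zero_iff hpk0).mp h
        · exact h
      apply hdinj x y
      have h2' : (2 : F) * x ^ d = 2 * y ^ d := by linear_combination hw0 - hzy
      exact mul_left_cancel₀ h2F h2'
    · have hR0 : 2 * (e * a) - b ^ p ^ k * b ≠ 0 := by
        intro h
        rw [h] at hwy
        rcases mul_eq_zero.mp hwy with h' | h'
        · exact hzy ((pow_eq_zero_iff hpk0).mp h')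
        · exact hzy h'
      have hz : ((2 * x ^ d - b) / (2 * y ^ d - b)) ^ p ^ k
          * ((2 * x ^ d - b) / (2 * y ^ d - b)) = 1 := by
        rw [div_pow, div_mul_div_comm, hwx, hwy, div_self hR0]
      rcases hunit2 _ hz with h1 | h1
      · have heq : 2 * x ^ d - b = 2 * y ^ d - b := (div_eq_one_iff_eq hzy).mp h1
        apply hdinj x y
        have h2' : (2 : F) * x ^ d = 2 * y ^ d := by linear_combination heq
        exact mul_left_cancel₀ h2F h2'
      · have heq : 2 * x ^ d - b = -(2 * y ^ d - b) := by
          have := (div_eq_iff hzy).mp h1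
          linear_combination this
        have h2'' : (2 : F) * y ^ d = 2 * (x + a) ^ d := by linear_combination heq - 2 * hx
        have hxy := hdinj y (x + a) (mul_left_cancel₀ h2F h2'')
        have hmm : y ^ m = (x + a) ^ m := by rw [hxy]
        rw [hy2, hx1] at hmm
        have h2e : (2 : F) * e = 0 := by linear_combination -hmm
        rcases mul_eq_zero.mp h2e with h | h
        · exact absurd h h2F
        · exact absurd h he0
  -- cover the solution set by three subsingleton classes
  set S1 := {x : F | (x + a) ^ d + x ^ d = b ∧ (x + a) ^ m = x ^ m} with hS1
  set S2 := {x : F | (x + a) ^ d + x ^ d = b ∧ (x + a) ^ m = 1 ∧ x ^ m = -1} with hS2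
  set S3 := {x : F | (x + a) ^ d + x ^ d = b ∧ (x + a) ^ m = -1 ∧ x ^ m = 1} with hS3
  have hcover : {x : F | (x + a) ^ d + x ^ d = b} ⊆ S1 ∪ (S2 ∪ S3) := by
    intro x hx
    simp only [Set.mem_setOf_eq] at hx
    rcases hchi_pm (x + a) (hxaS x hx) with h1 | h1 <;>
      rcases hchi_pm x (hx0S x hx) with h2 | h2
    · exact Or.inl ⟨hx, by rw [h1, h2]⟩
    · exact Or.inr (Or.inl ⟨hx, h1, h2⟩)
    · exact Or.inr (Or.inr ⟨hx, h1, h2⟩)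
    · exact Or.inl ⟨hx, by rw [h1, h2]⟩
  have hs1 : S1.ncard ≤ 1 := by
    refine (Set.ncard_le_one (Set.toFinite _)).mpr ?_
    rintro x ⟨hx, hxeq⟩ y ⟨hy, hyeq⟩
    rcases hchi_pm (x + a) (hxaS x hx) with h1 | h1 <;>
      rcases hchi_pm (y + a) (hxaS y hy) with h3 | h3
    · exact hC2s x y hx hy 1 one_ne_zero h1 (by rw [← hxeq, h1]) h3 (by rw [← hyeq, h3])
    · exact absurd (hC2o x y hx hy 1 one_ne_zero h1 (by rw [← hxeq, h1])
        (by rw [h3]) (by rw [← hyeq, h3])) not_false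
    · exact absurd (hC2o y x hy hx 1 one_ne_zero h3 (by rw [← hyeq, h3])
        (by rw [h1]) (by rw [← hxeq, h1])) not_false
    · exact hC2s x y hx hy (-1) (by norm_num) h1 (by rw [← hxeq, h1]) h3 (by rw [← hyeq, h3])
  have hs2 : S2.ncard ≤ 1 := by
    refine (Set.ncard_le_one (Set.toFinite _)).mpr ?_
    rintro x ⟨hx, hx1, hx2⟩ y ⟨hy, hy1, hy2⟩
    exact hC1 x y hx hy 1 one_ne_zero hx1 (by simpa using hx2) hy1 (by simpa using hy2)
  have hs3 : S3.ncard ≤ 1 := by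
    refine (Set.ncard_le_one (Set.toFinite _)).mpr ?_
    rintro x ⟨hx, hx1, hx2⟩ y ⟨hy, hy1, hy2⟩
    exact hC1 x y hx hy (-1) (by norm_num) hx1 (by simpa using hx2) hy1 (by simpa using hy2)
  calc {x : F | (x + a) ^ d + x ^ d = b}.ncard
      ≤ (S1 ∪ (S2 ∪ S3)).ncard := Set.ncard_le_ncard hcover (Set.toFinite _)
    _ ≤ S1.ncard + (S2 ∪ S3).ncard := Set.ncard_union_le _ _
    _ ≤ S1.ncard + (S2.ncard + S3.ncard) := by
        exact add_le_add le_rfl (Set.ncard_union_le _ _)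
    _ ≤ 1 + (1 + 1) := by
        exact add_le_add hs1 (add_le_add hs2 hs3)
    _ ≤ 3 := by norm_num
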